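/- For every n ≥ 1 and all j, k ∈ ℕ, the number of multisets of cardinality n of elements of ℕ×ℕ whose first coordinates sum to j and whose second coordinates sum to k equals the number of triples (σ, λ, μ), where σ is a permutation of {1,…,n} and λ, μ are partitions with at most n parts, such that maj(σ) + |λ| = j and maj(σ^{-1}) + |μ| = k. -/

import Mathlib

attribute [local instance] Classical.propDecidable

/-- The set of (1-based) descents of a permutation `σ` of `{1,…,n}`. -/
noncomputable def descSet {n : ℕ} (σ : Equiv.Perm (Fin n)) : Finset ℕ :=
  (Finset.range n).filter fun i =>
    ∃ (_ : 1 ≤ i) (h2 : i < n),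
      σ ⟨i, h2⟩ < σ ⟨i - 1, Nat.lt_of_le_of_lt (Nat.sub_le i 1) h2⟩

/-- Major index: the sum of the descents. -/
noncomputable def maj {n : ℕ} (σ : Equiv.Perm (Fin n)) : ℕ := ∑ i ∈ descSet σ, i

/-- Partitions with at most `n` parts: antitone vectors in `ℕ^n`. -/
def PartN (n : ℕ) := {l : Fin n → ℕ // ∀ i j : Fin n, i ≤ j → l j ≤ l i}


namespace Stmt14Aux

open Finset

/-- number of elements of `S` greater than `r` -/
noncomputable def DS (S : Finset ℕ) (r : ℕ) : ℕ := (S.filter fun t => r < t).card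

lemma DS_succ (S : Finset ℕ) (r : ℕ) :
    DS S r = DS S (r + 1) + (if r + 1 ∈ S then 1 else 0) := by
  unfold DS
  have h1 : S.filter (fun t => r < t) = S.filter (fun t => r + 1 < t ∨ t = r + 1) :=
    filter_congr (fun t _ => by constructor <;> omega)
  rw [h1, filter_or, card_union_of_disjoint, filter_eq']
  · split <;> simp
  · rw [Finset.disjoint_left]
    intro x hx hx'
    simp only [mem_filter] at hx hx'
    omega

lemma DS_antitone (S : Finset ℕ) {r s : ℕ} (h : r ≤ s) : DS S s ≤ DS S r := by
  apply card_le_card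
  apply monotone_filter_right
  intro t _ ht
  exact lt_of_le_of_lt (by omega) ht

lemma DS_eq_zero {n : ℕ} (S : Finset ℕ) (hS : ∀ t ∈ S, t < n) {r : ℕ} (h : n ≤ r + 1) :
    DS S r = 0 := by
  unfold DS
  rw [card_eq_zero, filter_eq_empty_iff]
  intro t ht
  have := hS t ht
  omega

lemma card_lt_fin {n t : ℕ} (ht : t < n) :
    (univ.filter fun i : Fin n => (i : ℕ) < t).card = t := by
  have h1 : (univ.filter fun i : Fin n => (i : ℕ) < t) = Finset.Iio (⟨t, ht⟩ : Fin n) := by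
    ext i
    simp [Fin.lt_def]
  rw [h1, Fin.card_Iio]

lemma sum_DS {n : ℕ} (S : Finset ℕ) (hS : ∀ t ∈ S, t < n) :
    ∑ i : Fin n, DS S (i : ℕ) = ∑ t ∈ S, t := by
  unfold DS
  simp_rw [card_filter]
  rw [Finset.sum_comm]
  refine Finset.sum_congr rfl fun t ht => ?_
  rw [← card_filter]
  exact card_lt_fin (hS t ht)

lemma chainR {α : Sort*} {R : α → α → Prop} (hR : Transitive R) {f : ℕ → α} {a b : ℕ}
    (h : a < b) (hc : ∀ m, a ≤ m → m + 1 ≤ b → R (f (m + 1)) (f m)) : R (f b) (f a) := by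
  induction b, h using Nat.le_induction with
  | base => exact hc a le_rfl le_rfl
  | succ b hb ih =>
    exact hR (hc b (by omega) le_rfl) (ih fun m h1 h2 => hc m h1 (by omega))

lemma succ_mem_descSet {n : ℕ} (σ : Equiv.Perm (Fin n)) {i : ℕ} (h : i + 1 < n) :
    (i + 1) ∈ descSet σ ↔ σ ⟨i + 1, h⟩ < σ ⟨i, by omega⟩ := by
  simp only [descSet, Finset.mem_filter, Finset.mem_range]
  constructor
  · rintro ⟨-, -, h2, hlt⟩
    exact hlt
  · intro hlt
    exact ⟨h, by omega, h, hlt⟩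

lemma descSet_lt {n : ℕ} (σ : Equiv.Perm (Fin n)) : ∀ t ∈ descSet σ, t < n := by
  intro t ht
  exact Finset.mem_range.mp (Finset.mem_of_mem_filter t ht)


section Build

variable {n : ℕ} (f : Fin n → ℕ) (S : Finset ℕ) (hS : ∀ t ∈ S, t < n)
  (hmono : ∀ (i : ℕ) (h : i + 1 < n), f ⟨i + 1, h⟩ ≤ f ⟨i, by omega⟩)
  (hstrict : ∀ (i : ℕ) (h : i + 1 < n), (i + 1) ∈ S → f ⟨i + 1, h⟩ < f ⟨i, by omega⟩)

include hS hmono hstrict in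
lemma DS_le : ∀ i : Fin n, DS S (i : ℕ) ≤ f i := by
  have key : ∀ k, ∀ i : Fin n, n - (i : ℕ) ≤ k + 1 → DS S (i : ℕ) ≤ f i := by
    intro k
    induction k with
    | zero =>
      intro i hi
      have h0 : DS S (i : ℕ) = 0 := DS_eq_zero S hS (by omega)
      omega
    | succ k ih =>
      intro i hi
      by_cases hlast : (i : ℕ) + 1 < n
      · have h2 := ih ⟨(i : ℕ) + 1, hlast⟩ (by simp; omega)
        rw [DS_succ]
        have heta : f ⟨(i : ℕ), i.isLt⟩ = f i := by rw [Fin.eta]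
        by_cases hd : (i : ℕ) + 1 ∈ S
        · have h3 := hstrict (i : ℕ) hlast hd
          rw [if_pos hd]
          simp only at h2 h3
          omega
        · have h3 := hmono (i : ℕ) hlast
          rw [if_neg hd]
          simp only at h2 h3
          omega
      · have h0 : DS S (i : ℕ) = 0 := DS_eq_zero S hS (by omega)
        omega
  exact fun i => key n i (by omega)

include hS hmono hstrict in
lemma sub_antitone : ∀ i i' : Fin n, i ≤ i' → f i' - DS S (i' : ℕ) ≤ f i - DS S (i : ℕ) := by
  intro i i' h
  rcases eq_or_lt_of_le h with h | h
  · rw [h]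
  · set F : ℕ → ℕ := fun m => if hm : m < n then f ⟨m, hm⟩ - DS S m else 0 with hF
    have hcon : F (i' : ℕ) ≤ F (i : ℕ) := by
      apply chainR (f := F) (R := fun x y : ℕ => x ≤ y) (fun x y z hxy hyz => le_trans hxy hyz) h
      intro m h1 h2
      have hm1 : m + 1 < n := lt_of_le_of_lt h2 i'.isLt
      have hm : m < n := by omega
      simp only [hF, dif_pos hm1, dif_pos hm]
      have hle := DS_le f S hS hmono hstrict ⟨m + 1, hm1⟩
      have hsucc := DS_succ S m
      simp only at hle
      by_cases hd : m + 1 ∈ S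
      · have h3 := hstrict m hm1 hd
        rw [if_pos hd] at hsucc
        omega
      · have h3 := hmono m hm1
        rw [if_neg hd] at hsucc
        omega
    simpa only [hF, dif_pos i.isLt, dif_pos i'.isLt, Fin.eta] using hcon

include hS hmono hstrict in
lemma sum_split :
    ∑ i : Fin n, f i = (∑ t ∈ S, t) + ∑ i : Fin n, (f i - DS S (i : ℕ)) := by
  rw [← sum_DS S hS, ← Finset.sum_add_distrib]
  refine Finset.sum_congr rfl fun i _ => ?_
  have := DS_le f S hS hmono hstrict i
  omega

end Build

/-- `Rlex x y` means `x ≤ y` in lexicographic order on `ℕ × ℕ`. -/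
def Rlex (x y : ℕ × ℕ) : Prop := x.1 < y.1 ∨ (x.1 = y.1 ∧ x.2 ≤ y.2)

/-- The decreasing-lex relation used for sorting. -/
def Rge (x y : ℕ × ℕ) : Prop := Rlex y x

lemma Rlex_trans {x y z : ℕ × ℕ} (h1 : Rlex x y) (h2 : Rlex y z) : Rlex x z := by
  unfold Rlex at *; omega

lemma Rlex_antisymm {x y : ℕ × ℕ} (h1 : Rlex x y) (h2 : Rlex y x) : x = y := by
  unfold Rlex at *
  have : x.1 = y.1 ∧ x.2 = y.2 := by omega
  exact Prod.ext this.1 this.2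

lemma Rlex_total (x y : ℕ × ℕ) : Rlex x y ∨ Rlex y x := by
  unfold Rlex; omega

instance : IsTrans (ℕ × ℕ) Rge := ⟨fun _ _ _ h1 h2 => Rlex_trans h2 h1⟩
instance : IsAntisymm (ℕ × ℕ) Rge := ⟨fun _ _ h1 h2 => Rlex_antisymm h2 h1⟩
instance : IsTotal (ℕ × ℕ) Rge := ⟨fun x y => Rlex_total y x⟩


variable {n : ℕ}

/-- the second-coordinate value attached to rank `r`. -/
noncomputable def cfun (σ : Equiv.Perm (Fin n)) (m : Fin n → ℕ) (r : Fin n) : ℕ :=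
  m r + DS (descSet σ⁻¹) (r : ℕ)

/-- the sorted biword of a triple. -/
noncomputable def gmap (σ : Equiv.Perm (Fin n)) (l m : Fin n → ℕ) (i : Fin n) : ℕ × ℕ :=
  (l i + DS (descSet σ) (i : ℕ), cfun σ m (σ i))

lemma cfun_antitone (σ : Equiv.Perm (Fin n)) (m : PartN n) {r r' : Fin n} (h : r ≤ r') :
    cfun σ m.1 r' ≤ cfun σ m.1 r :=
  add_le_add (m.2 r r' h) (DS_antitone _ h)

lemma not_descent_lt (σ : Equiv.Perm (Fin n)) {i : ℕ} (h : i + 1 < n)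
    (hnd : (i + 1) ∉ descSet σ) : σ ⟨i, by omega⟩ < σ ⟨i + 1, h⟩ := by
  rw [succ_mem_descSet σ h] at hnd
  rcases lt_trichotomy (σ ⟨i, by omega⟩) (σ ⟨i + 1, h⟩) with h1 | h1 | h1
  · exact h1
  · exfalso
    have := σ.injective h1
    simp [Fin.ext_iff] at this
  · exact absurd h1 hnd

lemma gmap_sorted (σ : Equiv.Perm (Fin n)) (l m : PartN n) :
    ∀ i i' : Fin n, i < i' → Rlex (gmap σ l.1 m.1 i') (gmap σ l.1 m.1 i) := by
  intro i i' h
  set G : ℕ → ℕ × ℕ := fun d => if hd : d < n then gmap σ l.1 m.1 ⟨d, hd⟩ else 0 with hG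
  have key : Rlex (G (i' : ℕ)) (G (i : ℕ)) := by
    apply chainR (R := Rlex) (fun _ _ _ h1 h2 => Rlex_trans h1 h2) h
    intro d h1 h2
    have hd1 : d + 1 < n := lt_of_le_of_lt h2 i'.isLt
    have hd0 : d < n := by omega
    simp only [hG, dif_pos hd1, dif_pos hd0]
    have hsucc := DS_succ (descSet σ) d
    have hl := l.2 ⟨d, hd0⟩ ⟨d + 1, hd1⟩ (by simp [Fin.le_def])
    by_cases hd : (d + 1) ∈ descSet σ
    · rw [if_pos hd] at hsucc
      left
      simp only [gmap]
      omega
    · rw [if_neg hd] at hsucc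
      have hσ : σ ⟨d, hd0⟩ < σ ⟨d + 1, hd1⟩ := not_descent_lt σ hd1 hd
      have hc : cfun σ m.1 (σ ⟨d + 1, hd1⟩) ≤ cfun σ m.1 (σ ⟨d, hd0⟩) :=
        cfun_antitone σ m (le_of_lt hσ)
      simp only [gmap]
      rcases lt_or_eq_of_le (show l.1 ⟨d+1, hd1⟩ + DS (descSet σ) (d+1) ≤
          l.1 ⟨d, hd0⟩ + DS (descSet σ) d by omega) with h3 | h3
      · left; exact h3
      · right; exact ⟨h3, hc⟩
  simpa only [hG, dif_pos i.isLt, dif_pos i'.isLt, Fin.eta] using key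

lemma sum_gmap_fst (σ : Equiv.Perm (Fin n)) (l m : PartN n) :
    ∑ i : Fin n, (gmap σ l.1 m.1 i).1 = maj σ + ∑ i : Fin n, l.1 i := by
  simp only [gmap]
  rw [Finset.sum_add_distrib, sum_DS (descSet σ) (descSet_lt σ)]
  rw [add_comm]
  rfl

lemma sum_gmap_snd (σ : Equiv.Perm (Fin n)) (l m : PartN n) :
    ∑ i : Fin n, (gmap σ l.1 m.1 i).2 = maj σ⁻¹ + ∑ i : Fin n, m.1 i := by
  simp only [gmap]
  rw [Equiv.sum_comp σ (fun r => cfun σ m.1 r)]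
  simp only [cfun]
  rw [Finset.sum_add_distrib, sum_DS (descSet σ⁻¹) (descSet_lt σ⁻¹)]
  rw [add_comm]
  rfl

lemma perm_rank_card (τ : Equiv.Perm (Fin n)) (i : Fin n) :
    (univ.filter fun i' => τ i' < τ i).card = (τ i : ℕ) := by
  rw [← Fin.card_Iio (τ i)]
  apply Finset.card_bij (fun i' _ => τ i')
  · intro a ha
    simp only [mem_filter, mem_univ, true_and] at ha
    simpa [Finset.mem_Iio] using ha
  · intro a _ b _ hab
    exact τ.injective hab
  · intro y hy
    refine ⟨τ⁻¹ y, ?_, by simp⟩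
    simp only [mem_filter, mem_univ, true_and, Equiv.Perm.coe_inv, Equiv.apply_symm_apply]
    simpa [Finset.mem_Iio] using hy

lemma perm_eq_of_lt_iff (σ σ' : Equiv.Perm (Fin n))
    (h : ∀ i i', σ i < σ i' ↔ σ' i < σ' i') : σ = σ' := by
  apply Equiv.ext
  intro i
  apply Fin.ext
  rw [← perm_rank_card σ i, ← perm_rank_card σ' i]
  congr 1
  apply filter_congr
  intro i' _
  constructor
  · exact (h i' i).mp
  · exact (h i' i).mpr

lemma sigma_lt_to (σ : Equiv.Perm (Fin n)) (m : PartN n) (i i' : Fin n) (hlt : σ i < σ i') :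
    cfun σ m.1 (σ i') < cfun σ m.1 (σ i) ∨
      (cfun σ m.1 (σ i') = cfun σ m.1 (σ i) ∧ i < i') := by
  have hle : cfun σ m.1 (σ i') ≤ cfun σ m.1 (σ i) := cfun_antitone σ m (le_of_lt hlt)
  rcases lt_or_eq_of_le hle with hc | hc
  · left; exact hc
  · right
    refine ⟨hc, ?_⟩
    have hconst : ∀ r : Fin n, σ i ≤ r → r ≤ σ i' → cfun σ m.1 r = cfun σ m.1 (σ i) := by
      intro r h1 h2
      have e1 := cfun_antitone σ m h1
      have e2 := cfun_antitone σ m h2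
      omega
    set F : ℕ → ℕ := fun r => if hr : r < n then ((σ⁻¹ ⟨r, hr⟩ : Fin n) : ℕ) else 0 with hF
    have hchain : F ((σ i' : ℕ)) > F ((σ i : ℕ)) := by
      apply chainR (R := fun x y : ℕ => y < x) (fun _ _ _ h1 h2 => lt_trans h2 h1) hlt
      intro d h1 h2
      have hd1 : d + 1 < n := lt_of_le_of_lt h2 (σ i').isLt
      have hd0 : d < n := by omega
      have hc1 : cfun σ m.1 ⟨d, hd0⟩ = cfun σ m.1 ⟨d + 1, hd1⟩ := by
        rw [hconst ⟨d, hd0⟩ (by simpa [Fin.le_def] using h1)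
            (by simp [Fin.le_def]; omega),
          hconst ⟨d + 1, hd1⟩ (by simp [Fin.le_def]; omega)
            (by simpa [Fin.le_def] using h2)]
      have hsucc := DS_succ (descSet σ⁻¹) d
      have hm := m.2 ⟨d, hd0⟩ ⟨d + 1, hd1⟩ (by simp [Fin.le_def])
      have hnotd : (d + 1) ∉ descSet σ⁻¹ := by
        intro hdm
        rw [if_pos hdm] at hsucc
        simp only [cfun] at hc1
        omega
      have hlt2 := not_descent_lt σ⁻¹ hd1 hnotd
      simp only [hF, dif_pos hd1, dif_pos hd0]
      exact hlt2
    simp only [hF, dif_pos (σ i).isLt, dif_pos (σ i').isLt, Fin.eta,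
      Equiv.Perm.coe_inv, Equiv.symm_apply_apply] at hchain
    exact hchain

lemma sigma_lt_iff (σ : Equiv.Perm (Fin n)) (m : PartN n) (i i' : Fin n) :
    σ i < σ i' ↔ (cfun σ m.1 (σ i') < cfun σ m.1 (σ i) ∨
      (cfun σ m.1 (σ i') = cfun σ m.1 (σ i) ∧ i < i')) := by
  constructor
  · exact sigma_lt_to σ m i i'
  · intro h
    rcases lt_trichotomy (σ i) (σ i') with h1 | h1 | h1
    · exact h1
    · exfalso
      have hii : i = i' := σ.injective h1
      subst hii
      rcases h with h | h
      · exact lt_irrefl _ h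
      · exact lt_irrefl _ h.2
    · exfalso
      have h2 := sigma_lt_to σ m i' i h1
      rcases h with h | h <;> rcases h2 with h2 | h2
      · omega
      · omega
      · omega
      · exact absurd (h.2.trans h2.2) (lt_irrefl i)

lemma sigma_eq (σ σ' : Equiv.Perm (Fin n)) (m m' : PartN n)
    (h : ∀ i : Fin n, cfun σ m.1 (σ i) = cfun σ' m'.1 (σ' i)) : σ = σ' := by
  apply perm_eq_of_lt_iff
  intro i i'
  rw [sigma_lt_iff σ m i i', sigma_lt_iff σ' m' i i', h i, h i']


/-- The bijection from triples to multisets. -/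
noncomputable def Fmap (t : Equiv.Perm (Fin n) × PartN n × PartN n) : Multiset (ℕ × ℕ) :=
  Finset.univ.val.map (gmap t.1 t.2.1.1 t.2.2.1)

lemma Fmap_eq_ofFn (t : Equiv.Perm (Fin n) × PartN n × PartN n) :
    Fmap t = ↑(List.ofFn (gmap t.1 t.2.1.1 t.2.2.1)) := Fin.univ_val_map _

lemma Fmap_card (t : Equiv.Perm (Fin n) × PartN n × PartN n) :
    Multiset.card (Fmap t) = n := by
  simp [Fmap]

lemma Fmap_sum_fst (t : Equiv.Perm (Fin n) × PartN n × PartN n) :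
    ((Fmap t).map Prod.fst).sum = maj t.1 + ∑ i : Fin n, t.2.1.1 i := by
  rw [← sum_gmap_fst t.1 t.2.1 t.2.2]
  simp only [Fmap, Multiset.map_map]
  rfl

lemma Fmap_sum_snd (t : Equiv.Perm (Fin n) × PartN n × PartN n) :
    ((Fmap t).map Prod.snd).sum = maj t.1⁻¹ + ∑ i : Fin n, t.2.2.1 i := by
  rw [← sum_gmap_snd t.1 t.2.1 t.2.2]
  simp only [Fmap, Multiset.map_map]
  rfl

lemma Fmap_injective : Function.Injective (Fmap (n := n)) := by
  rintro ⟨σ, l, m⟩ ⟨σ', l', m'⟩ h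
  have hperm : List.Perm (List.ofFn (gmap σ l.1 m.1)) (List.ofFn (gmap σ' l'.1 m'.1)) := by
    exact Multiset.coe_eq_coe.mp
      ((Fmap_eq_ofFn (σ, l, m)).symm.trans (h.trans (Fmap_eq_ofFn (σ', l', m'))))
  have hs1 : List.Pairwise Rge (List.ofFn (gmap σ l.1 m.1)) :=
    List.pairwise_ofFn.mpr fun i j hij => gmap_sorted σ l m i j hij
  have hs2 : List.Pairwise Rge (List.ofFn (gmap σ' l'.1 m'.1)) :=
    List.pairwise_ofFn.mpr fun i j hij => gmap_sorted σ' l' m' i j hij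
  have hg : gmap σ l.1 m.1 = gmap σ' l'.1 m'.1 :=
    List.ofFn_injective (List.Perm.eq_of_pairwise' hs1 hs2 hperm)
  have hB : ∀ i, cfun σ m.1 (σ i) = cfun σ' m'.1 (σ' i) :=
    fun i => congrArg Prod.snd (congrFun hg i)
  have hσ : σ = σ' := sigma_eq σ σ' m m' hB
  subst hσ
  have hl : l = l' := Subtype.ext (funext fun i => by
    have h1 := congrArg Prod.fst (congrFun hg i)
    simp only [gmap] at h1
    omega)
  have hm : m = m' := Subtype.ext (funext fun r => by
    have h1 := hB (σ⁻¹ r)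
    simp only [cfun, Equiv.Perm.coe_inv, Equiv.apply_symm_apply] at h1
    omega)
  rw [hl, hm]

lemma Fmap_surjective (m : Multiset (ℕ × ℕ)) (hcard : Multiset.card m = n) :
    ∃ t, Fmap (n := n) t = m := by
  classical
  have hL : ↑(Multiset.sort m Rge) = m := Multiset.sort_eq _ _
  have hlen : (Multiset.sort m Rge).length = n := by
    rw [Multiset.length_sort]; exact hcard
  set L := Multiset.sort m Rge with hLdef
  set g : Fin n → ℕ × ℕ := fun i => L.get (Fin.cast hlen.symm i) with hgdef
  have hofn : List.ofFn g = L := by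
    apply List.ext_get (by rw [List.length_ofFn, hlen])
    intro i h1 h2
    rw [List.get_ofFn]
    rfl
  have hm2 : Finset.univ.val.map g = m := by
    rw [Fin.univ_val_map, hofn, hL]
  have hsort : ∀ i i' : Fin n, i < i' → Rlex (g i') (g i) := by
    intro i i' hii
    have hs := Multiset.pairwise_sort m Rge
    exact hs.rel_get_of_lt (a := Fin.cast hlen.symm i) (b := Fin.cast hlen.symm i')
      (by exact hii)
  set b : Fin n → ℕ := fun i => (g i).2 with hbdef
  set a : Fin n → ℕ := fun i => (g i).1 with hadef
  set klt : Fin n → Fin n → Prop :=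
    fun i i' => b i' < b i ∨ (b i' = b i ∧ (i : ℕ) < (i' : ℕ)) with hkdef
  have hirr : ∀ i, ¬ klt i i := by
    intro i hi
    simp only [hkdef] at hi
    omega
  have htot : ∀ x y : Fin n, x ≠ y → klt x y ∨ klt y x := by
    intro x y hne
    have hv : (x : ℕ) < y ∨ (y : ℕ) < x := by
      rcases Nat.lt_trichotomy (x : ℕ) (y : ℕ) with h | h | h
      · exact Or.inl h
      · exact absurd (Fin.ext h) hne
      · exact Or.inr h
    simp only [hkdef]
    omega
  have hktrans : ∀ x y z : Fin n, klt x y → klt y z → klt x z := by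
    intro x y z h1 h2
    simp only [hkdef] at *
    omega
  set rank : Fin n → ℕ := fun i => (univ.filter fun i' => klt i' i).card with hrdef
  have hrank_lt : ∀ i, rank i < n := by
    intro i
    have hsub : (univ.filter fun i' => klt i' i) ⊆ univ.erase i := by
      intro x hx
      rw [mem_erase]
      refine ⟨?_, mem_univ x⟩
      intro hxi
      subst hxi
      exact hirr _ (mem_filter.mp hx).2
    have hcle := card_le_card hsub
    rw [card_erase_of_mem (mem_univ i), card_univ, Fintype.card_fin] at hcle
    have hpos := i.pos
    simp only [hrdef]
    omega
  have hrank_mono : ∀ i i', klt i i' → rank i < rank i' := by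
    intro i i' h
    simp only [hrdef]
    apply card_lt_card
    have hsub2 : (univ.filter fun x => klt x i) ⊆ (univ.filter fun x => klt x i') := by
      intro x hx
      simp only [mem_filter, mem_univ, true_and] at hx ⊢
      exact hktrans x i i' hx h
    rw [Finset.ssubset_iff_of_subset hsub2]
    refine ⟨i, ?_, ?_⟩
    · simp only [mem_filter, mem_univ, true_and]
      exact h
    · simp only [mem_filter, mem_univ, true_and]
      exact hirr i
  set σ₀ : Fin n → Fin n := fun i => ⟨rank i, hrank_lt i⟩ with hs0def
  have hinj : Function.Injective σ₀ := by
    intro x y hxy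
    by_contra hne
    have hr : rank x = rank y := congrArg Fin.val hxy
    rcases htot x y hne with h | h
    · exact absurd hr (Nat.ne_of_lt (hrank_mono x y h))
    · exact absurd hr.symm (Nat.ne_of_lt (hrank_mono y x h))
  set σ : Equiv.Perm (Fin n) := Equiv.ofBijective σ₀ (Finite.injective_iff_bijective.mp hinj)
    with hσdef
  have hσ : ∀ i, σ i = σ₀ i := fun _ => rfl
  have hlt_iff : ∀ i i', klt i i' ↔ σ i < σ i' := by
    intro i i'
    constructor
    · intro h
      have := hrank_mono i i' h
      exact this
    · intro h
      by_contra hnk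
      have hne : i ≠ i' := by
        rintro rfl
        exact lt_irrefl _ h
      rcases htot i i' hne with hk | hk
      · exact hnk hk
      · have h2 := hrank_mono i' i hk
        have h3 : (σ i : ℕ) < (σ i' : ℕ) := h
        simp only [hσ, hs0def] at h3
        omega
  have hb_anti : ∀ i i', σ i < σ i' → b i' ≤ b i := by
    intro i i' h
    have := (hlt_iff i i').mpr h
    simp only [hkdef] at this
    omega
  have hb_tie : ∀ i i', σ i < σ i' → b i' = b i → (i : ℕ) < (i' : ℕ) := by
    intro i i' h heq
    have := (hlt_iff i i').mpr h
    simp only [hkdef] at this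
    omega
  set c : Fin n → ℕ := fun r => b (σ⁻¹ r) with hcdef
  -- monotonicity facts for a
  have hmono_a : ∀ (r : ℕ) (h : r + 1 < n), a ⟨r + 1, h⟩ ≤ a ⟨r, by omega⟩ := by
    intro r h
    have := hsort ⟨r, by omega⟩ ⟨r + 1, h⟩ (by simp [Fin.lt_def])
    rcases this with h1 | h1
    · exact le_of_lt h1
    · exact le_of_eq h1.1
  have hstrict_a : ∀ (r : ℕ) (h : r + 1 < n), (r + 1) ∈ descSet σ →
      a ⟨r + 1, h⟩ < a ⟨r, by omega⟩ := by
    intro r h hd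
    have hr0 : r < n := by omega
    have hdlt : σ ⟨r + 1, h⟩ < σ ⟨r, hr0⟩ := (succ_mem_descSet σ h).mp hd
    have hk := (hlt_iff ⟨r + 1, h⟩ ⟨r, hr0⟩).mpr hdlt
    simp only [hkdef, hbdef, Fin.val_mk] at hk
    have hblt : (g ⟨r, hr0⟩).2 < (g ⟨r + 1, h⟩).2 := by omega
    have hs := hsort ⟨r, hr0⟩ ⟨r + 1, h⟩ (by simp [Fin.lt_def])
    unfold Rlex at hs
    simp only [hadef]
    rcases hs with h1 | h1
    · exact h1
    · exact absurd h1.2 (by omega)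
  -- monotonicity facts for c
  have hmono_c : ∀ (r : ℕ) (h : r + 1 < n), c ⟨r + 1, h⟩ ≤ c ⟨r, by omega⟩ := by
    intro r h
    apply hb_anti
    simp [Fin.lt_def]
  have hstrict_c : ∀ (r : ℕ) (h : r + 1 < n), (r + 1) ∈ descSet σ⁻¹ →
      c ⟨r + 1, h⟩ < c ⟨r, by omega⟩ := by
    intro r h hd
    have hr1 : r < n := by omega
    have hdlt : σ⁻¹ ⟨r + 1, h⟩ < σ⁻¹ ⟨r, hr1⟩ := (succ_mem_descSet σ⁻¹ h).mp hd
    rcases lt_or_eq_of_le (hmono_c r h) with h1 | h1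
    · exact h1
    · exfalso
      have hlt2 : σ (σ⁻¹ ⟨r, hr1⟩) < σ (σ⁻¹ ⟨r + 1, h⟩) := by
        simp only [Equiv.Perm.coe_inv, Equiv.apply_symm_apply]
        simp [Fin.lt_def]
      have heqb : b (σ⁻¹ ⟨r + 1, h⟩) = b (σ⁻¹ ⟨r, hr1⟩) := by
        simp only [hcdef] at h1
        exact h1
      have htie := hb_tie (σ⁻¹ ⟨r, hr1⟩) (σ⁻¹ ⟨r + 1, h⟩) hlt2 heqb
      have hd2 : ((σ⁻¹ ⟨r + 1, h⟩ : Fin n) : ℕ) < ((σ⁻¹ ⟨r, hr1⟩ : Fin n) : ℕ) := hdlt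
      omega
  -- the partitions
  set lam : Fin n → ℕ := fun i => a i - DS (descSet σ) (i : ℕ) with hlamdef
  set mu : Fin n → ℕ := fun r => c r - DS (descSet σ⁻¹) (r : ℕ) with hmudef
  have hlam : ∀ i j : Fin n, i ≤ j → lam j ≤ lam i :=
    fun i j hij => sub_antitone a (descSet σ) (descSet_lt σ) hmono_a hstrict_a i j hij
  have hmu : ∀ i j : Fin n, i ≤ j → mu j ≤ mu i :=
    fun i j hij => sub_antitone c (descSet σ⁻¹) (descSet_lt σ⁻¹) hmono_c hstrict_c i j hij
  refine ⟨(σ, ⟨lam, hlam⟩, ⟨mu, hmu⟩), ?_⟩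
  have hgm : gmap σ lam mu = g := by
    funext i
    have hfst : lam i + DS (descSet σ) (i : ℕ) = a i :=
      Nat.sub_add_cancel (DS_le a (descSet σ) (descSet_lt σ) hmono_a hstrict_a i)
    have hsnd : mu (σ i) + DS (descSet σ⁻¹) ((σ i : Fin n) : ℕ) = c (σ i) :=
      Nat.sub_add_cancel (DS_le c (descSet σ⁻¹) (descSet_lt σ⁻¹) hmono_c hstrict_c (σ i))
    have hci : c (σ i) = b i := by
      simp [hcdef]
    apply Prod.ext
    · exact hfst
    · simp only [gmap, cfun]
      rw [hsnd, hci]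
  show Finset.univ.val.map (gmap σ lam mu) = m
  rw [hgm, hm2]


end Stmt14Aux

open Stmt14Aux in
/-- The number of `n`-cell multisets in `ℕ × ℕ` with coordinate sums `(j,k)` equals
the number of triples `(σ, λ, μ)` with `maj σ + |λ| = j` and `maj σ⁻¹ + |μ| = k`. -/
theorem stmt14 (n : ℕ) (hn : 1 ≤ n) (j k : ℕ) :
    Set.ncard {m : Multiset (ℕ × ℕ) | Multiset.card m = n ∧
      (m.map Prod.fst).sum = j ∧ (m.map Prod.snd).sum = k} =
    Set.ncard {t : Equiv.Perm (Fin n) × PartN n × PartN n |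
      maj t.1 + (∑ i : Fin n, t.2.1.1 i) = j ∧
      maj t.1⁻¹ + (∑ i : Fin n, t.2.2.1 i) = k} := by
  have himg : Fmap '' {t : Equiv.Perm (Fin n) × PartN n × PartN n |
      maj t.1 + (∑ i : Fin n, t.2.1.1 i) = j ∧
      maj t.1⁻¹ + (∑ i : Fin n, t.2.2.1 i) = k} =
      {m : Multiset (ℕ × ℕ) | Multiset.card m = n ∧
      (m.map Prod.fst).sum = j ∧ (m.map Prod.snd).sum = k} := by
    ext m
    constructor
    · rintro ⟨t, ht, rfl⟩
      obtain ⟨ht1, ht2⟩ := ht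
      exact ⟨Fmap_card t, by rw [Fmap_sum_fst t]; exact ht1, by rw [Fmap_sum_snd t]; exact ht2⟩
    · rintro ⟨hc, h1, h2⟩
      obtain ⟨t, ht⟩ := Fmap_surjective m hc
      refine ⟨t, ⟨?_, ?_⟩, ht⟩
      · rw [← Fmap_sum_fst t, ht]; exact h1
      · rw [← Fmap_sum_snd t, ht]; exact h2
  rw [← himg, Set.ncard_image_of_injOn (Fmap_injective.injOn)]
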